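/- Let A be a Kreĭn C*-algebra with fundamental symmetries α and β, and suppose α and β commute. Then x ↦ ‖x‖_α and x ↦ ‖x‖_β, the unique C*-norms associated to α and β respectively, are equivalent norms on A. -/

import Mathlib

/-- An admissible (Kreĭn C*-) norm on a complex `*`-algebra `A` relative to a
`*`-automorphism `γ`: a complete submultiplicative algebra norm satisfying
`N (γ (star x) * x) = (N x)^2`. -/
structure KreinCStarNorm (A : Type*) [Ring A] [StarRing A] [Algebra ℂ A] (γ : A → A) where
  N : A → ℝ
  nonneg : ∀ x, 0 ≤ N x
  eq_zero : ∀ x, N x = 0 → x = 0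
  add_le : ∀ x y, N (x + y) ≤ N x + N y
  smul : ∀ (c : ℂ) (x : A), N (c • x) = ‖c‖ * N x
  mul_le : ∀ x y, N (x * y) ≤ N x * N y
  cstar : ∀ x, N (γ (star x) * x) = (N x) ^ 2
  complete : ∀ u : ℕ → A,
    (∀ ε > (0 : ℝ), ∃ n₀, ∀ m ≥ n₀, ∀ n ≥ n₀, N (u m - u n) < ε) →
    ∃ l : A, ∀ ε > (0 : ℝ), ∃ n₀, ∀ n ≥ n₀, N (u n - l) < ε

namespace KreinAux

open Filter ENNReal

section Abstract

variable {X : Type*} [NormedRing X] [NormedAlgebra ℂ X] [CompleteSpace X]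
  [StarRing X] [CStarRing X]

/-- The spectral radius of a selfadjoint element in a C*-normed complete
complex algebra equals its norm. -/
lemma sa_spectralRadius {a : X} (ha : IsSelfAdjoint a) :
    spectralRadius ℂ a = ‖a‖₊ := by
  have hconst : Tendsto (fun _n : ℕ => (‖a‖₊ : ℝ≥0∞)) atTop _ := tendsto_const_nhds
  refine tendsto_nhds_unique ?_ hconst
  convert
    (spectrum.pow_nnnorm_pow_one_div_tendsto_nhds_spectralRadius (a : X)).comp
      (tendsto_pow_atTop_atTop_of_one_lt (r := (2 : ℕ)) one_lt_two) using 1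
  refine funext fun n => ?_
  rw [Function.comp_apply, ha.nnnorm_pow_two_pow, ENNReal.coe_pow, ← rpow_natCast, ← rpow_mul]
  simp

/-- A star-preserving algebra automorphism of such an algebra is isometric. -/
lemma auto_isometry (e : X ≃ₐ[ℂ] X) (he : ∀ z : X, e (star z) = star (e z)) (x : X) :
    ‖e x‖ = ‖x‖ := by
  have hsa : ∀ s : X, IsSelfAdjoint s → ‖e s‖₊ = ‖s‖₊ := by
    intro s hs
    have h2 : IsSelfAdjoint (e s) := by
      rw [IsSelfAdjoint, ← he, hs.star_eq]
    have h1 : spectralRadius ℂ (e s) = spectralRadius ℂ s := by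
      unfold spectralRadius
      rw [AlgEquiv.spectrum_eq e s]
    rw [sa_spectralRadius h2, sa_spectralRadius hs] at h1
    exact_mod_cast h1
  have h := hsa (star x * x) (IsSelfAdjoint.star_mul_self x)
  rw [map_mul, he] at h
  rw [CStarRing.nnnorm_star_mul_self, CStarRing.nnnorm_star_mul_self] at h
  have h' : ‖e x‖ * ‖e x‖ = ‖x‖ * ‖x‖ := by
    have h'' := congrArg NNReal.toReal h
    simpa [NNReal.coe_mul, coe_nnnorm] using h''
  nlinarith [norm_nonneg (e x), norm_nonneg x]

end Abstract

variable {A : Type*} [Ring A] [StarRing A] [Algebra ℂ A]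

lemma N_zero {γ' : A → A} (Nγ : KreinCStarNorm A γ') : Nγ.N 0 = 0 := by
  have := Nγ.smul 0 0
  simpa using this


section Single

variable (γ : A ≃⋆ₐ[ℂ] A)

/-- Type synonym carrying the C*-algebra structure associated to a fundamental
symmetry `γ` and an admissible norm `Nγ`. -/
def Carrier (_hγ : ∀ x, γ (γ x) = x) (_Nγ : KreinCStarNorm A ⇑γ) : Type _ := A

variable (hγ : ∀ x, γ (γ x) = x) (Nγ : KreinCStarNorm A ⇑γ)

/-- The identity, viewed as a map into the carrier. -/
def toC : A → Carrier γ hγ Nγ := id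

instance : Ring (Carrier γ hγ Nγ) := (inferInstance : Ring A)
instance : Algebra ℂ (Carrier γ hγ Nγ) := (inferInstance : Algebra ℂ A)
instance [Nontrivial A] : Nontrivial (Carrier γ hγ Nγ) := (inferInstance : Nontrivial A)

/-- The twisted star structure on `A`. -/
@[reducible]
def starRingAux : StarRing A where
  star x := γ (star x)
  star_involutive x := by
    show γ (star (γ (star x))) = x
    rw [map_star, hγ, star_star]
  star_mul x y := by
    show γ (star (x * y)) = γ (star y) * γ (star x)
    rw [star_mul, map_mul]
  star_add x y := by
    show γ (star (x + y)) = γ (star x) + γ (star y)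
    rw [star_add, map_add]

instance : StarRing (Carrier γ hγ Nγ) := (starRingAux γ hγ : StarRing A)

/-- The normed ring structure on `A` induced by `Nγ`. -/
@[reducible]
noncomputable def normedRingAux : NormedRing A :=
  { AddGroupNorm.toNormedAddCommGroup
      { toFun := Nγ.N
        map_zero' := N_zero Nγ
        add_le' := Nγ.add_le
        neg' := fun x => by
          have h := Nγ.smul (-1) x
          simpa using h
        eq_zero_of_map_eq_zero' := fun x h => Nγ.eq_zero x h },
    (inferInstance : Ring A) with
    norm_mul_le := Nγ.mul_le }

noncomputable instance : NormedRing (Carrier γ hγ Nγ) := (normedRingAux γ Nγ : NormedRing A)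

noncomputable instance : NormedAlgebra ℂ (Carrier γ hγ Nγ) :=
  letI : NormedRing A := normedRingAux γ Nγ
  ({ (inferInstance : Algebra ℂ A) with
      norm_smul_le := fun c x => le_of_eq (Nγ.smul c x) } : NormedAlgebra ℂ A)

instance : CStarRing (Carrier γ hγ Nγ) :=
  @CStarRing.mk A (normedRingAux γ Nγ).toNonUnitalNormedRing (starRingAux γ hγ)
    (fun x => le_of_eq (by
      show Nγ.N x * Nγ.N x = Nγ.N (γ (star x) * x)
      rw [Nγ.cstar]; ring))

instance [Nontrivial A] : NormOneClass (Carrier γ hγ Nγ) := ⟨CStarRing.norm_one⟩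

lemma norm_toC (x : A) : ‖toC γ hγ Nγ x‖ = Nγ.N x := rfl

instance : CompleteSpace (Carrier γ hγ Nγ) := by
  apply Metric.complete_of_cauchySeq_tendsto
  intro u hu
  rw [Metric.cauchySeq_iff] at hu
  obtain ⟨l, hl⟩ := Nγ.complete u (by
    intro ε hε
    obtain ⟨n₀, hn₀⟩ := hu ε hε
    refine ⟨n₀, fun m hm n hn => ?_⟩
    have h := hn₀ m hm n hn
    rw [dist_eq_norm] at h
    exact h)
  refine ⟨l, Metric.tendsto_atTop.2 ?_⟩
  intro ε hε
  obtain ⟨n₀, hn₀⟩ := hl ε hε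
  refine ⟨n₀, fun n hn => ?_⟩
  show dist (u n) (toC γ hγ Nγ l) < ε
  rw [dist_eq_norm]
  exact hn₀ n hn

/-- Any star algebra automorphism of `A`, viewed as an algebra automorphism of the
carrier. -/
def algEquivOfC (δ : A ≃⋆ₐ[ℂ] A) : Carrier γ hγ Nγ ≃ₐ[ℂ] Carrier γ hγ Nγ :=
  { toFun := fun w => toC γ hγ Nγ (δ w)
    invFun := fun w => toC γ hγ Nγ (δ.symm w)
    left_inv := fun w => δ.symm_apply_apply w
    right_inv := fun w => δ.apply_symm_apply w
    map_mul' := fun a b => map_mul δ a b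
    map_add' := fun a b => map_add δ a b
    commutes' := fun c => by
      show δ (algebraMap ℂ A c) = algebraMap ℂ A c
      rw [Algebra.algebraMap_eq_smul_one, map_smul, map_one] }

end Single

/-- The central comparison: one admissible norm is dominated by the other. -/
lemma key (α β : A ≃⋆ₐ[ℂ] A) (hα : ∀ x, α (α x) = x) (hβ : ∀ x, β (β x) = x)
    (hcomm : ∀ x, α (β x) = β (α x))
    (Nα : KreinCStarNorm A ⇑α) (Nβ : KreinCStarNorm A ⇑β) [Nontrivial A]
    (x : A) : Nα.N x ≤ Nβ.N x := by
  set y : A := α (star x) * x with hy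
  -- `y` is selfadjoint in `X`
  have hysa : IsSelfAdjoint (toC α hα Nα y) := by
    show α (star (α (star x) * x)) = α (star x) * x
    rw [star_mul, ← map_star, star_star, map_mul, hα]
  -- spectral radius computations
  have h1 : spectralRadius ℂ (toC α hα Nα y) = ‖toC α hα Nα y‖₊ :=
    sa_spectralRadius hysa
  have h2 : spectralRadius ℂ (toC β hβ Nβ y) ≤ ‖toC β hβ Nβ y‖₊ :=
    spectrum.spectralRadius_le_nnnorm _
  have h3 : spectralRadius ℂ (toC α hα Nα y) = spectralRadius ℂ (toC β hβ Nβ y) := rfl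
  have h4 : Nα.N y ≤ Nβ.N y := by
    rw [← h3, h1] at h2
    have h5 : (‖toC α hα Nα y‖₊ : NNReal) ≤ ‖toC β hβ Nβ y‖₊ := by exact_mod_cast h2
    have h6 : ‖toC α hα Nα y‖ ≤ ‖toC β hβ Nβ y‖ := h5
    rw [norm_toC, norm_toC] at h6
    exact h6
  -- invariance of `Nβ` under `α` and `β`
  have hαY : ∀ z : A, Nβ.N (α z) = Nβ.N z := by
    intro z
    have he : ∀ w : Carrier β hβ Nβ, (algEquivOfC β hβ Nβ α) (star w)
          = star ((algEquivOfC β hβ Nβ α) w) := by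
      intro w
      show α (β (@star A _ w)) = β (@star A _ (α w))
      rw [hcomm (@star A _ w)]
      exact congrArg β (map_star α w)
    exact auto_isometry _ he (toC β hβ Nβ z)
  have hβY : ∀ z : A, Nβ.N (β z) = Nβ.N z := by
    intro z
    have he : ∀ w : Carrier β hβ Nβ, (algEquivOfC β hβ Nβ β) (star w)
          = star ((algEquivOfC β hβ Nβ β) w) := by
      intro w
      show β (β (@star A _ w)) = β (@star A _ (β w))
      exact congrArg β (map_star β w)
    exact auto_isometry _ he (toC β hβ Nβ z)
  have hstar : Nβ.N (α (star x)) = Nβ.N x := by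
    have h7 : Nβ.N (β (star x)) = Nβ.N x := norm_star (toC β hβ Nβ x)
    calc Nβ.N (α (star x)) = Nβ.N (α (β (β (star x)))) := by rw [hβ]
      _ = Nβ.N (β (β (star x))) := hαY _
      _ = Nβ.N (β (star x)) := hβY _
      _ = Nβ.N x := h7
  have h8 : Nβ.N y ≤ Nβ.N x * Nβ.N x := by
    calc Nβ.N y ≤ Nβ.N (α (star x)) * Nβ.N x := Nβ.mul_le _ _
      _ = Nβ.N x * Nβ.N x := by rw [hstar]
  have h9 : Nα.N x ^ 2 ≤ Nβ.N x ^ 2 :=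
    calc Nα.N x ^ 2 = Nα.N y := (Nα.cstar x).symm
      _ ≤ Nβ.N y := h4
      _ ≤ Nβ.N x * Nβ.N x := h8
      _ = Nβ.N x ^ 2 := (sq (Nβ.N x)).symm
  nlinarith [Nα.nonneg x, Nβ.nonneg x, h9]

end KreinAux

/-- If `α` and `β` are commuting fundamental symmetries of a Kreĭn C*-algebra `A`,
then the associated C*-norms `‖·‖_α` and `‖·‖_β` are equivalent. -/
theorem commuting_symmetries_norms_equivalent {A : Type*} [Ring A] [StarRing A]
    [Algebra ℂ A]
    (α β : A ≃⋆ₐ[ℂ] A) (hα : ∀ x, α (α x) = x) (hβ : ∀ x, β (β x) = x)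
    (hcomm : ∀ x, α (β x) = β (α x))
    (Nα : KreinCStarNorm A α) (Nβ : KreinCStarNorm A β) :
    ∃ c C : ℝ, 0 < c ∧ 0 < C ∧ ∀ x : A,
      c * Nα.N x ≤ Nβ.N x ∧ Nβ.N x ≤ C * Nα.N x := by
  refine ⟨1, 1, one_pos, one_pos, fun x => ?_⟩
  rcases subsingleton_or_nontrivial A with hs | hn
  · have hx : x = 0 := Subsingleton.elim _ _
    subst hx
    simp [KreinAux.N_zero Nα, KreinAux.N_zero Nβ]
  · constructor
    · simpa using KreinAux.key α β hα hβ hcomm Nα Nβ x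
    · simpa using KreinAux.key β α hβ hα (fun z => (hcomm z).symm) Nβ Nα x
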